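/- arXiv:1907.04502 — 2 statements merged into one kernel-verified Lean document; each statement's English description precedes it below -/
import Mathlib

section
/- Let Re > 0 be a real constant and define u(x, y, t) = 3/4 − 1/(4[1 + exp((−4x + 4y − t)·Re/32)]) and v(x, y, t) = 3/4 + 1/(4[1 + exp((−4x + 4y − t)·Re/32)]). Then u satisfies the first equation of the two-dimensional Burgers system, ∂_t u + u·∂_x u + v·∂_y u = (1/Re)(∂²_x u + ∂²_y u), at every point (x, y, t) ∈ R² × R. -/
open Real

private lemma hlin (a b : ℝ) (s : ℝ) : HasDerivAt (fun s' : ℝ => a * s' + b) a s := by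
  simpa using ((hasDerivAt_id s).const_mul a).add_const b

private lemma hpos (w : ℝ) : (4 * (1 + Real.exp w)) ≠ 0 := by positivity

private lemma hd1 (a b s : ℝ) :
    HasDerivAt (fun s' => 3 / 4 - 1 / (4 * (1 + Real.exp (a * s' + b))))
      (a * Real.exp (a * s + b) / (4 * (1 + Real.exp (a * s + b)) ^ 2)) s := by
  have h1 : HasDerivAt (fun s' => Real.exp (a * s' + b)) (Real.exp (a * s + b) * a) s :=
    (hlin a b s).exp
  have h2 : HasDerivAt (fun s' => 4 * (1 + Real.exp (a * s' + b)))
      (4 * (Real.exp (a * s + b) * a)) s := (h1.const_add 1).const_mul 4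
  have h3 := (h2.inv (hpos _)).const_sub (3 / 4)
  have he : (0:ℝ) < 1 + Real.exp (a * s + b) := by positivity
  simp only [one_div]
  refine h3.congr_deriv ?_
  field_simp

private lemma hd2 (a b s : ℝ) :
    HasDerivAt (fun s' => a * Real.exp (a * s' + b) / (4 * (1 + Real.exp (a * s' + b)) ^ 2))
      (a ^ 2 * Real.exp (a * s + b) * (1 - Real.exp (a * s + b)) /
        (4 * (1 + Real.exp (a * s + b)) ^ 3)) s := by
  have h1 : HasDerivAt (fun s' => Real.exp (a * s' + b)) (Real.exp (a * s + b) * a) s :=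
    (hlin a b s).exp
  have hnum : HasDerivAt (fun s' => a * Real.exp (a * s' + b))
      (a * (Real.exp (a * s + b) * a)) s := h1.const_mul a
  have hden : HasDerivAt (fun s' => 4 * (1 + Real.exp (a * s' + b)) ^ 2)
      (4 * (2 * (1 + Real.exp (a * s + b)) ^ 1 * (Real.exp (a * s + b) * a))) s :=
    ((h1.const_add 1).pow 2).const_mul 4
  have hne : (4 * (1 + Real.exp (a * s + b)) ^ 2) ≠ 0 := by positivity
  have h := hnum.div hden hne
  refine h.congr_deriv ?_
  have he : (0:ℝ) < 1 + Real.exp (a * s + b) := by positivity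
  field_simp
  ring

/-- The exact solution `u` of the 2D Burgers system satisfies the first equation
`∂ₜu + u ∂ₓu + v ∂_y u = (1/Re)(∂ₓ²u + ∂_y²u)` at every point of `ℝ² × ℝ`. -/
theorem burgers_2d_first_equation (Re : ℝ) (hRe : 0 < Re) :
    let u : ℝ → ℝ → ℝ → ℝ := fun x y t =>
      3 / 4 - 1 / (4 * (1 + Real.exp ((-4 * x + 4 * y - t) * Re / 32)))
    let v : ℝ → ℝ → ℝ → ℝ := fun x y t =>
      3 / 4 + 1 / (4 * (1 + Real.exp ((-4 * x + 4 * y - t) * Re / 32)))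
    ∀ x y t : ℝ,
      deriv (fun t' => u x y t') t
        + u x y t * deriv (fun x' => u x' y t) x
        + v x y t * deriv (fun y' => u x y' t) y
      = (1 / Re) * (deriv (deriv fun x' => u x' y t) x
          + deriv (deriv fun y' => u x y' t) y) := by
  intro u v x y t
  simp only [u, v]
  -- rewrite directional functions into affine form
  have hx : (fun x' => 3 / 4 - 1 / (4 * (1 + Real.exp ((-4 * x' + 4 * y - t) * Re / 32))))
      = fun x' => 3 / 4 - 1 / (4 * (1 + Real.exp ((-Re/8) * x' + (4*y - t) * Re / 32))) := by
    funext s; ring_nf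
  have hy : (fun y' => 3 / 4 - 1 / (4 * (1 + Real.exp ((-4 * x + 4 * y' - t) * Re / 32))))
      = fun y' => 3 / 4 - 1 / (4 * (1 + Real.exp ((Re/8) * y' + (-4*x - t) * Re / 32))) := by
    funext s; ring_nf
  have ht : (fun t' => 3 / 4 - 1 / (4 * (1 + Real.exp ((-4 * x + 4 * y - t') * Re / 32))))
      = fun t' => 3 / 4 - 1 / (4 * (1 + Real.exp ((-Re/32) * t' + (-4*x + 4*y) * Re / 32))) := by
    funext s; ring_nf
  rw [hx, hy, ht]
  have dx1 : deriv (fun x' => 3 / 4 - 1 / (4 * (1 + Real.exp ((-Re/8) * x' + (4*y - t) * Re / 32))))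
      = fun x' => (-Re/8) * Real.exp ((-Re/8) * x' + (4*y - t) * Re / 32) /
          (4 * (1 + Real.exp ((-Re/8) * x' + (4*y - t) * Re / 32)) ^ 2) := by
    funext s; exact (hd1 _ _ s).deriv
  have dy1 : deriv (fun y' => 3 / 4 - 1 / (4 * (1 + Real.exp ((Re/8) * y' + (-4*x - t) * Re / 32))))
      = fun y' => (Re/8) * Real.exp ((Re/8) * y' + (-4*x - t) * Re / 32) /
          (4 * (1 + Real.exp ((Re/8) * y' + (-4*x - t) * Re / 32)) ^ 2) := by
    funext s; exact (hd1 _ _ s).deriv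
  simp only [dx1, dy1]
  rw [(hd1 (-Re/32) ((-4*x + 4*y) * Re / 32) t).deriv]
  rw [(hd2 (-Re/8) ((4*y - t) * Re / 32) x).deriv, (hd2 (Re/8) ((-4*x - t) * Re / 32) y).deriv]
  have e1 : (-Re/8) * x + (4*y - t) * Re / 32 = (-4 * x + 4 * y - t) * Re / 32 := by ring
  have e2 : (Re/8) * y + (-4*x - t) * Re / 32 = (-4 * x + 4 * y - t) * Re / 32 := by ring
  have e3 : (-Re/32) * t + (-4*x + 4*y) * Re / 32 = (-4 * x + 4 * y - t) * Re / 32 := by ring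
  simp only [e1, e2, e3]
  set E := Real.exp ((-4 * x + 4 * y - t) * Re / 32) with hE
  have hEpos : (0:ℝ) < E := Real.exp_pos _
  have h1 : (0:ℝ) < 1 + E := by linarith
  field_simp
  ring
end

section
/- Let Re > 0 be a real constant and define u(x, y, t) = 3/4 − 1/(4[1 + exp((−4x + 4y − t)·Re/32)]) and v(x, y, t) = 3/4 + 1/(4[1 + exp((−4x + 4y − t)·Re/32)]). Then v satisfies the second equation of the two-dimensional Burgers system, ∂_t v + u·∂_x v + v·∂_y v = (1/Re)(∂²_x v + ∂²_y v), at every point (x, y, t) ∈ R² × R. -/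
private lemma burgers_aux_hasDerivAt (a b s : ℝ) :
    HasDerivAt (fun s => 3 / 4 + 1 / (4 * (1 + Real.exp (a * s + b))))
      (-(a * Real.exp (a * s + b)) / (4 * (1 + Real.exp (a * s + b)) ^ 2)) s := by
  have hE : HasDerivAt (fun s => Real.exp (a * s + b)) (Real.exp (a * s + b) * a) s := by
    have h : HasDerivAt (fun s : ℝ => a * s + b) a s := by
      simpa using ((hasDerivAt_id s).const_mul a).add_const b
    exact h.exp
  have hg : HasDerivAt (fun s => 4 * (1 + Real.exp (a * s + b)))
      (4 * (Real.exp (a * s + b) * a)) s := (hE.const_add 1).const_mul 4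
  have hne : (4 * (1 + Real.exp (a * s + b))) ≠ 0 := by positivity
  have h2 := (hg.inv hne).const_add (3 / 4 : ℝ)
  have hne' : (1 + Real.exp (a * s + b)) ≠ 0 := by positivity
  convert h2 using 1
  · rfl
  · rfl
  · funext u; rw [one_div]; rfl
  · field_simp

private lemma burgers_aux_deriv (a b : ℝ) :
    (deriv fun s => 3 / 4 + 1 / (4 * (1 + Real.exp (a * s + b))))
      = fun s => -(a * Real.exp (a * s + b)) / (4 * (1 + Real.exp (a * s + b)) ^ 2) := by
  funext s; exact (burgers_aux_hasDerivAt a b s).deriv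

private lemma burgers_aux_hasDerivAt2 (a b s : ℝ) :
    HasDerivAt (fun s => -(a * Real.exp (a * s + b)) / (4 * (1 + Real.exp (a * s + b)) ^ 2))
      (a ^ 2 * Real.exp (a * s + b) * (Real.exp (a * s + b) - 1)
        / (4 * (1 + Real.exp (a * s + b)) ^ 3)) s := by
  have hE : HasDerivAt (fun s => Real.exp (a * s + b)) (Real.exp (a * s + b) * a) s := by
    have h : HasDerivAt (fun s : ℝ => a * s + b) a s := by
      simpa using ((hasDerivAt_id s).const_mul a).add_const b
    exact h.exp
  have hN : HasDerivAt (fun s => -(a * Real.exp (a * s + b)))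
      (-(a * (Real.exp (a * s + b) * a))) s := (hE.const_mul a).neg
  have hD' : HasDerivAt (fun s => 4 * (1 + Real.exp (a * s + b)) ^ 2)
      ((↑(2 : ℕ) * (1 + Real.exp (a * s + b)) ^ (2 - 1) * (Real.exp (a * s + b) * a)) * 4) s := by
    have := ((hE.const_add 1).pow 2).const_mul (4 : ℝ)
    convert this using 1
    · rfl
    · rfl
    · rfl
    ring
  have hne : (4 * (1 + Real.exp (a * s + b)) ^ 2) ≠ 0 := by positivity
  have hne' : (1 + Real.exp (a * s + b)) ≠ 0 := by positivity
  have h2 := hN.div hD' hne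
  convert h2 using 1
  · rfl
  · rfl
  · rfl
  field_simp
  ring

private lemma burgers_aux_deriv2 (a b : ℝ) :
    (deriv fun s => -(a * Real.exp (a * s + b)) / (4 * (1 + Real.exp (a * s + b)) ^ 2))
      = fun s => a ^ 2 * Real.exp (a * s + b) * (Real.exp (a * s + b) - 1)
        / (4 * (1 + Real.exp (a * s + b)) ^ 3) := by
  funext s; exact (burgers_aux_hasDerivAt2 a b s).deriv

/-- The exact solution `v` of the 2D Burgers system satisfies the second equation
`∂ₜv + u ∂ₓv + v ∂_y v = (1/Re)(∂ₓ²v + ∂_y²v)` at every point of `ℝ² × ℝ`. -/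
theorem burgers_2d_second_equation (Re : ℝ) (hRe : 0 < Re) :
    let u : ℝ → ℝ → ℝ → ℝ := fun x y t =>
      3 / 4 - 1 / (4 * (1 + Real.exp ((-4 * x + 4 * y - t) * Re / 32)))
    let v : ℝ → ℝ → ℝ → ℝ := fun x y t =>
      3 / 4 + 1 / (4 * (1 + Real.exp ((-4 * x + 4 * y - t) * Re / 32)))
    ∀ x y t : ℝ,
      deriv (fun t' => v x y t') t
        + u x y t * deriv (fun x' => v x' y t) x
        + v x y t * deriv (fun y' => v x y' t) y
      = (1 / Re) * (deriv (deriv fun x' => v x' y t) x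
          + deriv (deriv fun y' => v x y' t) y) := by
  intro u v x y t
  have ht : (fun t' => v x y t')
      = fun s => 3 / 4 + 1 / (4 * (1 + Real.exp ((-Re / 32) * s + (-4 * x + 4 * y) * Re / 32))) := by
    funext s
    have : (-4 * x + 4 * y - s) * Re / 32 = (-Re / 32) * s + (-4 * x + 4 * y) * Re / 32 := by ring
    simp only [v, this]
  have hx : (fun x' => v x' y t)
      = fun s => 3 / 4 + 1 / (4 * (1 + Real.exp ((-Re / 8) * s + (4 * y - t) * Re / 32))) := by
    funext s
    have : (-4 * s + 4 * y - t) * Re / 32 = (-Re / 8) * s + (4 * y - t) * Re / 32 := by ring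
    simp only [v, this]
  have hy : (fun y' => v x y' t)
      = fun s => 3 / 4 + 1 / (4 * (1 + Real.exp ((Re / 8) * s + (-4 * x - t) * Re / 32))) := by
    funext s
    have : (-4 * x + 4 * s - t) * Re / 32 = (Re / 8) * s + (-4 * x - t) * Re / 32 := by ring
    simp only [v, this]
  rw [ht, hx, hy, burgers_aux_deriv, burgers_aux_deriv, burgers_aux_deriv,
    burgers_aux_deriv2, burgers_aux_deriv2]
  simp only [u, v]
  have e1 : (-Re / 32) * t + (-4 * x + 4 * y) * Re / 32 = (-4 * x + 4 * y - t) * Re / 32 := by ring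
  have e2 : (-Re / 8) * x + (4 * y - t) * Re / 32 = (-4 * x + 4 * y - t) * Re / 32 := by ring
  have e3 : (Re / 8) * y + (-4 * x - t) * Re / 32 = (-4 * x + 4 * y - t) * Re / 32 := by ring
  rw [e1, e2, e3]
  set E := Real.exp ((-4 * x + 4 * y - t) * Re / 32) with hEdef
  have hE : 0 < E := Real.exp_pos _
  have hne : (1 + E) ≠ 0 := by positivity
  have hRe' : Re ≠ 0 := ne_of_gt hRe
  field_simp
  ring
end
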